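/- For any vectors a, b in a finite-dimensional complex Hilbert space and any unitary operator W, if ⟨b|W|a⟩ ≠ 0 then there exists an integer m ≥ 0 such that ⟨a|Wᵐ|b⟩ ≠ 0. -/

import Mathlib

/-- If `⟨b|W|a⟩ ≠ 0` for a unitary `W` on a finite-dimensional complex Hilbert space,
then `⟨a|Wᵐ|b⟩ ≠ 0` for some `m ≥ 0`. -/
theorem reverse_amplitude {H : Type*} [NormedAddCommGroup H] [InnerProductSpace ℂ H]
    [FiniteDimensional ℂ H] (W : H →L[ℂ] H) (hW : W ∈ unitary (H →L[ℂ] H))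
    (a b : H) (h : (inner ℂ b (W a) : ℂ) ≠ 0) :
    ∃ m : ℕ, (inner ℂ a ((W ^ m) b) : ℂ) ≠ 0 := by
  by_contra hc
  push_neg at hc
  apply h
  have h1 : star W * W = 1 := hW.1
  set Wl : H →ₗ[ℂ] H := (W : H →L[ℂ] H).toLinearMap with hWl
  set S : Submodule ℂ H := Submodule.span ℂ (Set.range fun m : ℕ => (W ^ m) b) with hSdef
  have hb : b ∈ S := Submodule.subset_span ⟨0, by simp⟩
  have hWS : ∀ x ∈ S, Wl x ∈ S := by
    intro x hx
    induction hx using Submodule.span_induction with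
    | mem y hy =>
        obtain ⟨m, rfl⟩ := hy
        exact Submodule.subset_span ⟨m + 1, by
          simp [hWl, pow_succ', ContinuousLinearMap.mul_apply]⟩
    | zero => simp
    | add y z _ _ hy hz => simpa using S.add_mem hy hz
    | smul c y _ hy => simpa using S.smul_mem c hy
  set g : S →ₗ[ℂ] S := Wl.restrict hWS with hg
  have hWinj : Function.Injective W := by
    intro x y hxy
    have : (star W) (W x) = (star W) (W y) := by rw [hxy]
    simpa [← ContinuousLinearMap.mul_apply, h1] using this
  have hginj : Function.Injective g := by
    intro x y hxy
    ext
    have : Wl x = Wl y := congrArg Subtype.val hxy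
    exact hWinj this
  have hgsurj : Function.Surjective g :=
    (LinearMap.injective_iff_surjective (f := g)).mp hginj
  obtain ⟨x, hx⟩ := hgsurj ⟨b, hb⟩
  have hxb : W (x : H) = b := congrArg Subtype.val hx
  have ha : ∀ y ∈ S, (inner ℂ a y : ℂ) = 0 := by
    intro y hy
    induction hy using Submodule.span_induction with
    | mem y hy => obtain ⟨m, rfl⟩ := hy; exact hc m
    | zero => simp
    | add y z _ _ hy hz => simp [inner_add_right, hy, hz]
    | smul c y _ hy => simp [inner_smul_right, hy]
  have key : (inner ℂ (W a) b : ℂ) = 0 := by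
    rw [← hxb]
    have : (inner ℂ (W a) (W (x : H)) : ℂ) = inner ℂ a (x : H) := by
      rw [← ContinuousLinearMap.adjoint_inner_left]
      have : (ContinuousLinearMap.adjoint W) (W a) = a := by
        rw [← ContinuousLinearMap.star_eq_adjoint, ← ContinuousLinearMap.mul_apply, h1]
        simp
      rw [this]
    rw [this]
    exact ha _ x.2
  calc (inner ℂ b (W a) : ℂ) = starRingEnd ℂ (inner ℂ (W a) b) := (inner_conj_symm _ _).symm
    _ = 0 := by rw [key]; simp
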